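/- Fix a real number δ with 0 < δ < 1, and for each integer m ≥ 2 set c_m := (δ/m)^{2/(m−1)} and r_{m,δ} := 1 − 4δ/m, and let ι_{m,δ}(z) := z^m + δ·z·η_{r_{m,δ}}(z). Then for every real ε with 0 < ε < 1 there exists M ∈ ℕ such that for all integers m ≥ M and all z ∈ ℂ with |z| ≤ 1 − ε one has |ι_{m,δ}(z)| ≤ (1−ε)^m + δ(1−ε) < c_m^m + δ·c_m. Consequently, for all such m, every z in the closed unit disk with |ι_{m,δ}(z)| > c_m^m + δ·c_m satisfies 1 − ε < |z| ≤ 1. -/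

import Mathlib

/-- The bump function `b(x) = exp(1 + 1/(x²−1))` for `x < 1`, and `b(x) = 0` for `x ≥ 1`. -/
noncomputable def bumpB (x : ℝ) : ℝ :=
  if x < 1 then Real.exp (1 + 1 / (x ^ 2 - 1)) else 0

/-- `η̂_r(x) = 1` for `x ≤ r`, `= b((x−r)/(1−r))` for `r ≤ x ≤ 1`, and `= 0` for `x ≥ 1`. -/
noncomputable def etaHat (r : ℝ) (x : ℝ) : ℝ :=
  if x ≤ r then 1 else bumpB ((x - r) / (1 - r))

/-- `η_r(z) := η̂_r(|z|)`. -/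
noncomputable def eta (r : ℝ) (z : ℂ) : ℝ :=
  etaHat r ‖z‖

/-- The interpolation `ι_{m,δ}(z) := z^m + δ·z·η_{r}(z)` with `r = r_{m,δ} := 1 − 4δ/m`. -/
noncomputable def iota (m : ℕ) (δ : ℝ) (z : ℂ) : ℂ :=
  z ^ m + (δ : ℂ) * z * ((eta (1 - 4 * δ / (m : ℝ)) z : ℝ) : ℂ)

/-- `c_m := (δ/m)^(2/(m−1))` (real power). -/
noncomputable def cm (δ : ℝ) (m : ℕ) : ℝ :=
  (δ / (m : ℝ)) ^ ((2 : ℝ) / ((m : ℝ) - 1))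

lemma bumpB_nonneg (x : ℝ) : 0 ≤ bumpB x := by
  unfold bumpB
  split
  · exact (Real.exp_pos _).le
  · exact le_rfl

lemma bumpB_le_one {x : ℝ} (hx : 0 ≤ x) : bumpB x ≤ 1 := by
  unfold bumpB
  split
  · rename_i h
    rw [Real.exp_le_one_iff]
    have hneg : x ^ 2 - 1 < 0 := by nlinarith
    have : 1 / (x ^ 2 - 1) ≤ -1 := by
      rw [div_le_iff_of_neg hneg]; nlinarith
    linarith
  · norm_num

lemma etaHat_nonneg {r : ℝ} (x : ℝ) : 0 ≤ etaHat r x := by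
  unfold etaHat
  split
  · norm_num
  · exact bumpB_nonneg _

lemma etaHat_le_one {r : ℝ} (hr : r < 1) (x : ℝ) : etaHat r x ≤ 1 := by
  unfold etaHat
  split
  · exact le_rfl
  · rename_i h
    push_neg at h
    exact bumpB_le_one (div_nonneg (by linarith) (by linarith))

lemma tendsto_cm {δ : ℝ} (h0 : 0 < δ) :
    Filter.Tendsto (fun m : ℕ => cm δ m) Filter.atTop (nhds 1) := by
  have hexp : Filter.Tendsto (fun x : ℝ => (2 : ℝ) / (x - 1)) Filter.atTop (nhds 0) :=
    Filter.Tendsto.div_atTop tendsto_const_nhds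
      (Filter.tendsto_atTop_add_const_right _ (-1) Filter.tendsto_id)
  have hA : Filter.Tendsto (fun x : ℝ => δ ^ ((2 : ℝ) / (x - 1))) Filter.atTop (nhds 1) := by
    have hc : ContinuousAt (fun t : ℝ => δ ^ t) 0 :=
      Real.continuousAt_const_rpow (ne_of_gt h0)
    have := hc.tendsto.comp hexp
    simpa [Function.comp_def, Real.rpow_zero] using this
  have hB : Filter.Tendsto (fun x : ℝ => x ^ ((2 : ℝ) / (x - 1))) Filter.atTop (nhds 1) := by
    have := tendsto_rpow_div_mul_add 2 1 (-1) zero_ne_one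
    refine this.congr fun x => ?_
    norm_num [sub_eq_add_neg]
  have hreal : Filter.Tendsto (fun x : ℝ => (δ / x) ^ ((2 : ℝ) / (x - 1)))
      Filter.atTop (nhds 1) := by
    have hdiv := hA.div hB one_ne_zero
    rw [div_one] at hdiv
    refine Filter.Tendsto.congr' ?_ hdiv
    filter_upwards [Filter.eventually_gt_atTop (0 : ℝ)] with x hx
    rw [Real.div_rpow h0.le hx.le]
    rfl
  exact hreal.comp tendsto_natCast_atTop_atTop

theorem iota_preimage_of_annulus_near_circle (δ : ℝ) (h0 : 0 < δ) (h1 : δ < 1)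
    (ε : ℝ) (he0 : 0 < ε) (he1 : ε < 1) :
    ∃ M : ℕ, ∀ m : ℕ, M ≤ m →
      (∀ z : ℂ, ‖z‖ ≤ 1 - ε →
        ‖iota m δ z‖ ≤ (1 - ε) ^ m + δ * (1 - ε)) ∧
      ((1 - ε) ^ m + δ * (1 - ε) < cm δ m ^ m + δ * cm δ m) ∧
      (∀ z : ℂ, ‖z‖ ≤ 1 →
        cm δ m ^ m + δ * cm δ m < ‖iota m δ z‖ →
        1 - ε < ‖z‖) := by
  have hpow : Filter.Tendsto (fun m : ℕ => (1 - ε) ^ m) Filter.atTop (nhds 0) :=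
    tendsto_pow_atTop_nhds_zero_of_lt_one (by linarith) (by linarith)
  have h1' : ∀ᶠ m : ℕ in Filter.atTop, (1 - ε) ^ m < δ * ε / 2 :=
    hpow.eventually_lt_const (by positivity)
  have h2' : ∀ᶠ m : ℕ in Filter.atTop, 1 - ε / 2 < cm δ m :=
    (tendsto_cm h0).eventually_const_lt (by linarith)
  obtain ⟨M, hM⟩ := ((h1'.and h2').and (Filter.eventually_ge_atTop 1)).exists_forall_of_atTop
  refine ⟨M, fun m hm => ?_⟩
  obtain ⟨⟨hpm, hcm⟩, hm1⟩ := hM m hm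
  have hcm0 : 0 ≤ cm δ m :=
    Real.rpow_nonneg (div_nonneg h0.le (Nat.cast_nonneg m)) _
  have hcmpow : 0 ≤ cm δ m ^ m := pow_nonneg hcm0 m
  have key : ∀ z : ℂ, ‖z‖ ≤ 1 - ε →
      ‖iota m δ z‖ ≤ (1 - ε) ^ m + δ * (1 - ε) := by
    intro z hz
    have hz0 : 0 ≤ ‖z‖ := norm_nonneg z
    have hr : 1 - 4 * δ / (m : ℝ) < 1 := by
      have hm0 : (0 : ℝ) < m := by exact_mod_cast hm1
      have : 0 < 4 * δ / (m : ℝ) := by positivity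
      linarith
    set η := eta (1 - 4 * δ / (m : ℝ)) z with hη
    have hη0 : 0 ≤ η := etaHat_nonneg _
    have hη1 : η ≤ 1 := etaHat_le_one hr _
    have htri : ‖iota m δ z‖ ≤
        ‖z‖ ^ m + δ * ‖z‖ * η := by
      unfold iota
      refine le_trans (norm_add_le _ _) ?_
      rw [norm_pow, norm_mul, norm_mul, Complex.norm_real, Complex.norm_real, Real.norm_eq_abs, Real.norm_eq_abs]
      rw [abs_of_pos h0, abs_of_nonneg hη0]
    refine le_trans htri ?_
    have h1 : ‖z‖ ^ m ≤ (1 - ε) ^ m := pow_le_pow_left₀ hz0 hz m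
    have h2 : δ * ‖z‖ * η ≤ δ * (1 - ε) := by
      have hzη : ‖z‖ * η ≤ (1 - ε) * 1 := mul_le_mul hz hη1 hη0 (by linarith)
      rw [mul_one] at hzη
      calc δ * ‖z‖ * η = δ * (‖z‖ * η) := by ring
        _ ≤ δ * (1 - ε) := mul_le_mul_of_nonneg_left hzη h0.le
    linarith
  refine ⟨key, by nlinarith, fun z hz hgt => ?_⟩
  by_contra hcon
  push_neg at hcon
  have := key z hcon
  nlinarith
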